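/- Let f_N : ℝ → ℝ be a sequence of affine functions, f_N(t) = a_N + b_N t, and let f : ℝ → ℝ be concave. Assume that a_N → f(0), that liminf_{N→∞} f_N(t) ≥ f(t) for every t ∈ ℝ, and that f is differentiable at 0. Then b_N → f'(0). -/
import Mathlib


open Filter

/-- If `f_N(t) = a_N + b_N t` are affine, `f` is concave, `a_N → f(0)`,
`liminf_N f_N(t) ≥ f(t)` for every `t`, and `f` is differentiable at `0` with derivative `c`,
then `b_N → c = f'(0)`. -/
theorem stmt11 (a b : ℕ → ℝ) (f : ℝ → ℝ)
    (hconc : ConcaveOn ℝ Set.univ f)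
    (ha : Tendsto a atTop (nhds (f 0)))
    (hliminf : ∀ t : ℝ,
      ((f t : ℝ) : EReal) ≤ liminf (fun N : ℕ => ((a N + b N * t : ℝ) : EReal)) atTop)
    (c : ℝ) (hderiv : HasDerivAt f c 0) :
    Tendsto b atTop (nhds c) := by
  have hs : Tendsto (slope f 0) (nhdsWithin 0 {(0:ℝ)}ᶜ) (nhds c) :=
    hasDerivAt_iff_tendsto_slope.1 hderiv
  -- key helper: from liminf bound get eventual lower bound
  have key : ∀ (t y : ℝ), y < f t → ∀ᶠ N in atTop, y < a N + b N * t := by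
    intro t y hy
    have h1 : (y : EReal) < liminf (fun N : ℕ => ((a N + b N * t : ℝ) : EReal)) atTop :=
      lt_of_lt_of_le (by exact_mod_cast hy) (hliminf t)
    filter_upwards [eventually_lt_of_lt_liminf h1] with N hN
    exact_mod_cast hN
  rw [tendsto_order]
  constructor
  · intro x hx
    set ε := c - x with hε
    have hε0 : 0 < ε := by simp [hε]; linarith
    -- find t > 0 with slope f 0 t > c - ε/2
    have hsl : Tendsto (slope f 0) (nhdsWithin 0 (Set.Ioi 0)) (nhds c) :=
      hs.mono_left (nhdsWithin_mono 0 (fun s hs => ne_of_gt hs))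
    have hev : ∀ᶠ t in nhdsWithin 0 (Set.Ioi 0),
        c - ε/2 < slope f 0 t ∧ t ∈ Set.Ioi (0:ℝ) :=
      (hsl.eventually (eventually_gt_nhds (by linarith))).and self_mem_nhdsWithin
    obtain ⟨t, hslope, ht⟩ := hev.exists
    have ht0 : (0:ℝ) < t := ht
    have hslope' : f t - f 0 > (c - ε/2) * t := by
      have : slope f 0 t = (f t - f 0) / t := by simp [slope_def_field, div_eq_div_iff]
      rw [this] at hslope
      calc (c - ε/2) * t < ((f t - f 0)/t) * t := by
            exact mul_lt_mul_of_pos_right hslope ht0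
        _ = f t - f 0 := by field_simp
    have hA : ∀ᶠ N in atTop, a N < f 0 + ε * t / 4 :=
      ha.eventually (eventually_lt_nhds (by nlinarith))
    filter_upwards [key t (f t - ε * t / 4) (by nlinarith), hA] with N h1 h2
    have : b N * t > x * t := by nlinarith
    exact lt_of_mul_lt_mul_right (by linarith [this]) ht0.le |>.trans_le le_rfl
  · intro x hx
    set ε := x - c with hε
    have hε0 : 0 < ε := by simp [hε]; linarith
    have hsl : Tendsto (slope f 0) (nhdsWithin 0 (Set.Iio 0)) (nhds c) :=
      hs.mono_left (nhdsWithin_mono 0 (fun s hs => ne_of_lt hs))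
    have hev : ∀ᶠ t in nhdsWithin 0 (Set.Iio 0),
        slope f 0 t < c + ε/2 ∧ t ∈ Set.Iio (0:ℝ) :=
      (hsl.eventually (eventually_lt_nhds (by linarith))).and self_mem_nhdsWithin
    obtain ⟨t, hslope, ht⟩ := hev.exists
    have ht0 : t < 0 := ht
    have hslope' : f t - f 0 > (c + ε/2) * t := by
      have : slope f 0 t = (f t - f 0) / t := by simp [slope_def_field, div_eq_div_iff]
      rw [this] at hslope
      nlinarith [mul_lt_mul_of_neg_right hslope ht0, div_mul_cancel₀ (f t - f 0) (ne_of_lt ht0)]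
    have hA : ∀ᶠ N in atTop, a N < f 0 - ε * t / 4 :=
      ha.eventually (eventually_lt_nhds (by nlinarith))
    filter_upwards [key t (f t + ε * t / 4) (by nlinarith), hA] with N h1 h2
    have : b N * t > x * t := by nlinarith
    nlinarith
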